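/- Set ξ₃ = δ₁δ₂δ₁ and ξ₄ = δ₁δ₂δ₃δ₁δ₂δ₁ in B₄(S²). Then ξ₃² and ξ₄² both belong to the pure sphere braid group P₄(S²) = ker π₄, and each commutes with every element of P₄(S²); i.e., ξ₃² and ξ₄² lie in the center of P₄(S²). -/

import Mathlib

/-- The relators of the sphere braid group `B₄(S²)`: the two braid relations, the
commutation relation, and the sphere relation `δ₁δ₂δ₃δ₃δ₂δ₁ = 1`. -/
def sphereBraidRel4 : Set (FreeGroup (Fin 3)) :=
  {FreeGroup.of 0 * FreeGroup.of 1 * FreeGroup.of 0 *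
      (FreeGroup.of 1 * FreeGroup.of 0 * FreeGroup.of 1)⁻¹,
   FreeGroup.of 1 * FreeGroup.of 2 * FreeGroup.of 1 *
      (FreeGroup.of 2 * FreeGroup.of 1 * FreeGroup.of 2)⁻¹,
   FreeGroup.of 0 * FreeGroup.of 2 * (FreeGroup.of 2 * FreeGroup.of 0)⁻¹,
   FreeGroup.of 0 * FreeGroup.of 1 * FreeGroup.of 2 *
      FreeGroup.of 2 * FreeGroup.of 1 * FreeGroup.of 0}

/-- The sphere braid group `B₄(S²)` on 4 strands. -/
abbrev SphereBraidGroup4 : Type := PresentedGroup sphereBraidRel4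

/-- The standard generators `δ₁, δ₂, δ₃` of `B₄(S²)` (indexed by `0, 1, 2`). -/
def δ (i : Fin 3) : SphereBraidGroup4 := PresentedGroup.of i

/-- The adjacent transpositions in `S₄`. -/
def spherePermGen : Fin 3 → Equiv.Perm (Fin 4) := ![Equiv.swap 0 1, Equiv.swap 1 2, Equiv.swap 2 3]

lemma spherePermGen_rel : ∀ r ∈ sphereBraidRel4, FreeGroup.lift spherePermGen r = 1 := by
  intro r hr
  rcases hr with hr | hr | hr | hr <;>
    (subst hr; simp only [map_mul, map_inv, FreeGroup.lift_apply_of]; decide)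

/-- The projection `π₄ : B₄(S²) → S₄` sending `δᵢ` to the transposition `(i-1, i)`. -/
def πB4S2 : SphereBraidGroup4 →* Equiv.Perm (Fin 4) := PresentedGroup.toGroup spherePermGen_rel

/-- The half twist `ξ₃ = δ₁δ₂δ₁` of the first three strands. -/
def ξ₃ : SphereBraidGroup4 := δ 0 * δ 1 * δ 0

/-- The half twist `ξ₄ = δ₁δ₂δ₃δ₁δ₂δ₁` of all four strands. -/
def ξ₄ : SphereBraidGroup4 := δ 0 * δ 1 * δ 2 * δ 0 * δ 1 * δ 0

namespace SphereBraidAux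

lemma relator_eq_one {r : FreeGroup (Fin 3)} (h : r ∈ sphereBraidRel4) :
    PresentedGroup.mk sphereBraidRel4 r = 1 :=
  (QuotientGroup.eq_one_iff r).mpr (Subgroup.subset_normalClosure h)

lemma r1 : δ 0 * δ 1 * δ 0 = δ 1 * δ 0 * δ 1 := by
  have h := relator_eq_one (show _ ∈ sphereBraidRel4 from Or.inl rfl)
  simp only [map_mul, map_inv] at h
  rw [mul_inv_eq_one] at h
  exact h

lemma r2 : δ 1 * δ 2 * δ 1 = δ 2 * δ 1 * δ 2 := by
  have h := relator_eq_one (show _ ∈ sphereBraidRel4 from Or.inr (Or.inl rfl))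
  simp only [map_mul, map_inv] at h
  rw [mul_inv_eq_one] at h
  exact h

lemma r3 : δ 0 * δ 2 = δ 2 * δ 0 := by
  have h := relator_eq_one (show _ ∈ sphereBraidRel4 from Or.inr (Or.inr (Or.inl rfl)))
  simp only [map_mul, map_inv] at h
  rw [mul_inv_eq_one] at h
  exact h

lemma r4 : δ 0 * δ 1 * δ 2 * δ 2 * δ 1 * δ 0 = 1 := by
  have h := relator_eq_one (show _ ∈ sphereBraidRel4 from Or.inr (Or.inr (Or.inr rfl)))
  simp only [map_mul] at h
  exact h

/-- `c⁻¹ a = a c⁻¹`. -/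
lemma ca_inv : (δ 2)⁻¹ * δ 0 = δ 0 * (δ 2)⁻¹ := by
  calc (δ 2)⁻¹ * δ 0 = (δ 2)⁻¹ * (δ 0 * δ 2) * (δ 2)⁻¹ := by group
    _ = (δ 2)⁻¹ * (δ 2 * δ 0) * (δ 2)⁻¹ := by rw [r3]
    _ = δ 0 * (δ 2)⁻¹ := by group

/-- `c⁻² = b a a b`, a consequence of the sphere relation. -/
lemma hcc : (δ 2)⁻¹ * (δ 2)⁻¹ = δ 1 * δ 0 * δ 0 * δ 1 := by
  calc (δ 2)⁻¹ * (δ 2)⁻¹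
      = δ 1 * δ 0 * (δ 0 * δ 1 * δ 2 * δ 2 * δ 1 * δ 0)⁻¹ * δ 0 * δ 1 := by group
    _ = δ 1 * δ 0 * (1 : SphereBraidGroup4)⁻¹ * δ 0 * δ 1 := by rw [r4]
    _ = δ 1 * δ 0 * δ 0 * δ 1 := by group

/-- `abc = (cba)⁻¹`, a consequence of the sphere relation. -/
lemma habc : δ 0 * δ 1 * δ 2 = (δ 2 * δ 1 * δ 0)⁻¹ := by
  calc δ 0 * δ 1 * δ 2
      = (δ 0 * δ 1 * δ 2 * δ 2 * δ 1 * δ 0) * (δ 2 * δ 1 * δ 0)⁻¹ := by group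
    _ = (1 : SphereBraidGroup4) * (δ 2 * δ 1 * δ 0)⁻¹ := by rw [r4]
    _ = (δ 2 * δ 1 * δ 0)⁻¹ := by group

/-- `abaab = baaba` in the braid group. -/
lemma w1 : δ 0 * δ 1 * δ 0 * δ 0 * δ 1 = δ 1 * δ 0 * δ 0 * δ 1 * δ 0 := by
  calc δ 0 * δ 1 * δ 0 * δ 0 * δ 1
      = (δ 0 * δ 1 * δ 0) * δ 0 * δ 1 := by group
    _ = (δ 1 * δ 0 * δ 1) * δ 0 * δ 1 := by rw [r1]
    _ = δ 1 * δ 0 * (δ 1 * δ 0 * δ 1) := by group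
    _ = δ 1 * δ 0 * (δ 0 * δ 1 * δ 0) := by rw [← r1]
    _ = δ 1 * δ 0 * δ 0 * δ 1 * δ 0 := by group

/-- key: `(abc) ξ₃ (abc) = ξ₃`. -/
lemma key : (δ 0 * δ 1 * δ 2) * ξ₃ * (δ 0 * δ 1 * δ 2) = ξ₃ := by
  calc (δ 0 * δ 1 * δ 2) * ξ₃ * (δ 0 * δ 1 * δ 2)
      = (δ 2 * δ 1 * δ 0)⁻¹ * ξ₃ * (δ 2 * δ 1 * δ 0)⁻¹ := by rw [habc]
    _ = (δ 0)⁻¹ * (δ 1)⁻¹ * ((δ 2)⁻¹ * δ 0) * (δ 2)⁻¹ := by rw [ξ₃]; group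
    _ = (δ 0)⁻¹ * (δ 1)⁻¹ * (δ 0 * (δ 2)⁻¹) * (δ 2)⁻¹ := by rw [ca_inv]
    _ = (δ 0)⁻¹ * (δ 1)⁻¹ * δ 0 * ((δ 2)⁻¹ * (δ 2)⁻¹) := by group
    _ = (δ 0)⁻¹ * (δ 1)⁻¹ * δ 0 * (δ 1 * δ 0 * δ 0 * δ 1) := by rw [hcc]
    _ = (δ 0)⁻¹ * (δ 1)⁻¹ * (δ 0 * δ 1 * δ 0 * δ 0 * δ 1) := by group
    _ = (δ 0)⁻¹ * (δ 1)⁻¹ * (δ 1 * δ 0 * δ 0 * δ 1 * δ 0) := by rw [w1]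
    _ = ξ₃ := by rw [ξ₃]; group

lemma key2 : (δ 0 * δ 1 * δ 2)⁻¹ * ξ₃ * (δ 0 * δ 1 * δ 2)⁻¹ = ξ₃ := by
  have : ξ₃ = (δ 0 * δ 1 * δ 2)⁻¹ * ((δ 0 * δ 1 * δ 2) * ξ₃ * (δ 0 * δ 1 * δ 2)) *
      (δ 0 * δ 1 * δ 2)⁻¹ := by group
  rw [key] at this
  exact this.symm

/-- `ξ₄ = ξ₃ (abc)⁻¹`. -/
lemma hxi4 : ξ₄ = ξ₃ * (δ 0 * δ 1 * δ 2)⁻¹ := by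
  calc ξ₄ = δ 0 * δ 1 * (δ 2 * δ 0) * δ 1 * δ 0 := by rw [ξ₄]; group
    _ = δ 0 * δ 1 * (δ 0 * δ 2) * δ 1 * δ 0 := by rw [← r3]
    _ = ξ₃ * (δ 2 * δ 1 * δ 0) := by rw [ξ₃]; group
    _ = ξ₃ * (δ 0 * δ 1 * δ 2)⁻¹ := by rw [habc, inv_inv]

/-- `ξ₃² = ξ₄²`. -/
lemma sq_eq : ξ₃ ^ 2 = ξ₄ ^ 2 := by
  calc ξ₃ ^ 2 = ξ₃ * ξ₃ := sq ξ₃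
    _ = ξ₃ * ((δ 0 * δ 1 * δ 2)⁻¹ * ξ₃ * (δ 0 * δ 1 * δ 2)⁻¹) := by rw [key2]
    _ = (ξ₃ * (δ 0 * δ 1 * δ 2)⁻¹) * (ξ₃ * (δ 0 * δ 1 * δ 2)⁻¹) := by group
    _ = ξ₄ * ξ₄ := by rw [← hxi4]
    _ = ξ₄ ^ 2 := (sq ξ₄).symm

/-- `Δ a = c Δ`. -/
lemma conj_a : δ 2 * ξ₄ = ξ₄ * δ 0 := by
  calc δ 2 * ξ₄ = (δ 2 * δ 0) * (δ 1 * δ 2 * δ 0 * δ 1 * δ 0) := by rw [ξ₄]; group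
    _ = (δ 0 * δ 2) * (δ 1 * δ 2 * δ 0 * δ 1 * δ 0) := by rw [← r3]
    _ = δ 0 * (δ 2 * δ 1 * δ 2) * (δ 0 * δ 1 * δ 0) := by group
    _ = δ 0 * (δ 1 * δ 2 * δ 1) * (δ 0 * δ 1 * δ 0) := by rw [← r2]
    _ = δ 0 * δ 1 * δ 2 * (δ 1 * δ 0 * δ 1) * δ 0 := by group
    _ = δ 0 * δ 1 * δ 2 * (δ 0 * δ 1 * δ 0) * δ 0 := by rw [← r1]
    _ = ξ₄ * δ 0 := by rw [ξ₄]; group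

/-- `Δ b = b Δ`. -/
lemma conj_b : δ 1 * ξ₄ = ξ₄ * δ 1 := by
  have h1 : δ 1 * ξ₄ = δ 0 * δ 1 * δ 2 * δ 0 * δ 0 * δ 1 * δ 0 := by
    calc δ 1 * ξ₄ = (δ 1 * δ 0 * δ 1) * (δ 2 * δ 0 * δ 1 * δ 0) := by rw [ξ₄]; group
      _ = (δ 0 * δ 1 * δ 0) * (δ 2 * δ 0 * δ 1 * δ 0) := by rw [← r1]
      _ = δ 0 * δ 1 * (δ 0 * δ 2) * (δ 0 * δ 1 * δ 0) := by group
      _ = δ 0 * δ 1 * (δ 2 * δ 0) * (δ 0 * δ 1 * δ 0) := by rw [r3]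
      _ = δ 0 * δ 1 * δ 2 * δ 0 * δ 0 * δ 1 * δ 0 := by group
  have h2 : ξ₄ * δ 1 = δ 0 * δ 1 * δ 2 * δ 0 * δ 0 * δ 1 * δ 0 := by
    calc ξ₄ * δ 1 = δ 0 * δ 1 * δ 2 * δ 0 * (δ 1 * δ 0 * δ 1) := by rw [ξ₄]; group
      _ = δ 0 * δ 1 * δ 2 * δ 0 * (δ 0 * δ 1 * δ 0) := by rw [← r1]
      _ = δ 0 * δ 1 * δ 2 * δ 0 * δ 0 * δ 1 * δ 0 := by group
  rw [h1, h2]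

/-- `Δ c = a Δ`. -/
lemma conj_c : δ 0 * ξ₄ = ξ₄ * δ 2 := by
  have h1 : δ 0 * ξ₄ = δ 0 * δ 1 * δ 0 * δ 1 * δ 2 * δ 1 * δ 0 := by
    calc δ 0 * ξ₄ = δ 0 * δ 0 * δ 1 * (δ 2 * δ 0) * δ 1 * δ 0 := by rw [ξ₄]; group
      _ = δ 0 * δ 0 * δ 1 * (δ 0 * δ 2) * δ 1 * δ 0 := by rw [← r3]
      _ = δ 0 * (δ 0 * δ 1 * δ 0) * (δ 2 * δ 1 * δ 0) := by group
      _ = δ 0 * (δ 1 * δ 0 * δ 1) * (δ 2 * δ 1 * δ 0) := by rw [r1]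
      _ = δ 0 * δ 1 * δ 0 * δ 1 * δ 2 * δ 1 * δ 0 := by group
  have h2 : ξ₄ * δ 2 = δ 0 * δ 1 * δ 0 * δ 1 * δ 2 * δ 1 * δ 0 := by
    calc ξ₄ * δ 2 = δ 0 * δ 1 * δ 2 * δ 0 * δ 1 * (δ 0 * δ 2) := by rw [ξ₄]; group
      _ = δ 0 * δ 1 * δ 2 * δ 0 * δ 1 * (δ 2 * δ 0) := by rw [r3]
      _ = δ 0 * δ 1 * (δ 2 * δ 0) * (δ 1 * δ 2) * δ 0 := by group
      _ = δ 0 * δ 1 * (δ 0 * δ 2) * (δ 1 * δ 2) * δ 0 := by rw [← r3]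
      _ = δ 0 * δ 1 * δ 0 * (δ 2 * δ 1 * δ 2) * δ 0 := by group
      _ = δ 0 * δ 1 * δ 0 * (δ 1 * δ 2 * δ 1) * δ 0 := by rw [← r2]
      _ = δ 0 * δ 1 * δ 0 * δ 1 * δ 2 * δ 1 * δ 0 := by group
  rw [h1, h2]

lemma comm_gen (i : Fin 3) : Commute (ξ₄ ^ 2) (δ i) := by
  fin_cases i
  · show ξ₄ ^ 2 * δ 0 = δ 0 * ξ₄ ^ 2
    calc ξ₄ ^ 2 * δ 0 = ξ₄ * (ξ₄ * δ 0) := by rw [sq, mul_assoc]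
      _ = ξ₄ * (δ 2 * ξ₄) := by rw [conj_a]
      _ = (ξ₄ * δ 2) * ξ₄ := by group
      _ = (δ 0 * ξ₄) * ξ₄ := by rw [conj_c]
      _ = δ 0 * ξ₄ ^ 2 := by rw [sq, mul_assoc]
  · show ξ₄ ^ 2 * δ 1 = δ 1 * ξ₄ ^ 2
    calc ξ₄ ^ 2 * δ 1 = ξ₄ * (ξ₄ * δ 1) := by rw [sq, mul_assoc]
      _ = ξ₄ * (δ 1 * ξ₄) := by rw [conj_b]
      _ = (ξ₄ * δ 1) * ξ₄ := by group
      _ = (δ 1 * ξ₄) * ξ₄ := by rw [conj_b]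
      _ = δ 1 * ξ₄ ^ 2 := by rw [sq, mul_assoc]
  · show ξ₄ ^ 2 * δ 2 = δ 2 * ξ₄ ^ 2
    calc ξ₄ ^ 2 * δ 2 = ξ₄ * (ξ₄ * δ 2) := by rw [sq, mul_assoc]
      _ = ξ₄ * (δ 0 * ξ₄) := by rw [conj_c]
      _ = (ξ₄ * δ 0) * ξ₄ := by group
      _ = (δ 2 * ξ₄) * ξ₄ := by rw [conj_a]
      _ = δ 2 * ξ₄ ^ 2 := by rw [sq, mul_assoc]

lemma central (x : SphereBraidGroup4) : Commute (ξ₄ ^ 2) x := by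
  have hx : x ∈ Subgroup.closure (Set.range (PresentedGroup.of :
      Fin 3 → SphereBraidGroup4)) := by
    rw [PresentedGroup.closure_range_of]; trivial
  induction hx using Subgroup.closure_induction with
  | mem y hy => obtain ⟨i, rfl⟩ := hy; exact comm_gen i
  | one => exact Commute.one_right _
  | mul y z _ _ hy hz => exact hy.mul_right hz
  | inv y _ hy => exact hy.inv_right

end SphereBraidAux

/-- `ξ₃²` and `ξ₄²` are pure sphere braids and are central in the pure sphere braid
group `P₄(S²) = ker π₄`. -/
theorem halfTwists_sq_central_in_pureSphereBraidGroup4 :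
    ξ₃ ^ 2 ∈ πB4S2.ker ∧ ξ₄ ^ 2 ∈ πB4S2.ker ∧
      ∀ p ∈ πB4S2.ker, Commute (ξ₃ ^ 2) p ∧ Commute (ξ₄ ^ 2) p := by
  refine ⟨?_, ?_, fun p _ => ⟨?_, SphereBraidAux.central p⟩⟩
  · show πB4S2 (ξ₃ ^ 2) = 1
    simp only [ξ₃, δ, map_pow, map_mul, πB4S2, PresentedGroup.toGroup.of]
    decide
  · show πB4S2 (ξ₄ ^ 2) = 1
    simp only [ξ₄, δ, map_pow, map_mul, πB4S2, PresentedGroup.toGroup.of]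
    decide
  · rw [SphereBraidAux.sq_eq]
    exact SphereBraidAux.central p
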